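/- Equivariance of α-sets: Let x ∈ X, σ ∈ S^G_{<∞} with domain d and range c, f ∈ G, and let α ≥ 1 be a countable ordinal. Then: (a) B_α(f·x, σ) = B_α(x, σf), where σf denotes the composition σ∘f restricted to f⁻¹[d]; in particular B_α(f·x, σ) = B_α(x, σ) for every f ∈ V^G_d; (b) f·B_α(x,σ) = B_α(x, fσ), where fσ denotes the composition f∘σ (an element of S^G_{<∞} with domain d); in particular f·B_α(x,σ) = B_α(x,σ) for every f ∈ V^G_c. -/

import Mathlib

open Set Pointwise

noncomputable section

/-- `S_∞`, the group of all permutations of `ℕ`. -/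
abbrev Sinf : Type := Equiv.Perm ℕ

/-- The topology of pointwise convergence on `S_∞`. -/
instance SinfTopology : TopologicalSpace Sinf :=
  TopologicalSpace.induced (fun g : Sinf => (g : ℕ → ℕ)) Pi.topologicalSpace

/-- The graph of the restriction of a permutation `g` to a finite set `d`. -/
def restr (g : Sinf) (d : Finset ℕ) : Set (ℕ × ℕ) := {p | p.1 ∈ d ∧ g p.1 = p.2}

/-- The domain of a partial map coded by its graph. -/
def pdom (σ : Set (ℕ × ℕ)) : Set ℕ := Prod.fst '' σ

/-- The range of a partial map coded by its graph. -/
def prng (σ : Set (ℕ × ℕ)) : Set ℕ := Prod.snd '' σ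

/-- `S^G_{<∞}`: graphs of restrictions of elements of `G` to finite subsets of `ℕ`. -/
def SGfin (G : Subgroup Sinf) : Set (Set (ℕ × ℕ)) :=
  {σ | ∃ g ∈ G, ∃ d : Finset ℕ, σ = restr g d}

/-- `V^G_σ`: the elements of `G` extending the partial bijection `σ`. -/
def Vb (G : Subgroup Sinf) (σ : Set (ℕ × ℕ)) : Set G :=
  {g : G | ∀ p ∈ σ, (g : Sinf) p.1 = p.2}

/-- `V^G_c`: the pointwise stabilizer of `c ⊆ ℕ` in `G`. -/
def Vc (G : Subgroup Sinf) (c : Set ℕ) : Set G :=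
  {g : G | ∀ k ∈ c, (g : Sinf) k = k}

/-- The identity partial bijection on `c`. -/
def idb (c : Set ℕ) : Set (ℕ × ℕ) := {p | p.1 ∈ c ∧ p.2 = p.1}

/-- The composition `σ ∘ f`, restricted to `f⁻¹[dom σ]`. -/
def compR (σ : Set (ℕ × ℕ)) (f : Sinf) : Set (ℕ × ℕ) := {p | (f p.1, p.2) ∈ σ}

/-- The composition `f ∘ σ`. -/
def compL (f : Sinf) (σ : Set (ℕ × ℕ)) : Set (ℕ × ℕ) := {p | (p.1, f⁻¹ p.2) ∈ σ}

/-- The Borel classes `Σ⁰_α(X)`: `Σ⁰_1(X)` consists of the open sets, and for `α > 1`,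
`Σ⁰_α(X)` consists of countable unions of sets whose complements lie in
`⋃_{1 ≤ β < α} Σ⁰_β(X)` (i.e. of sets from `⋃_{1 ≤ β < α} Π⁰_β(X)`). -/
def SigmaB (X : Type*) [TopologicalSpace X] (α : Ordinal.{0}) : Set (Set X) :=
  if α ≤ 1 then {s | IsOpen s}
  else {s | ∃ f : ℕ → Set X,
      (∀ n, ∃ β : {γ : Ordinal.{0} // γ < α}, 1 ≤ β.1 ∧ (f n)ᶜ ∈ SigmaB X β.1) ∧
      s = ⋃ n, f n}
termination_by α
decreasing_by exact β.2

/-- The Borel classes `Π⁰_α(X)`: complements of sets in `Σ⁰_α(X)`. -/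
def PiB (X : Type*) [TopologicalSpace X] (α : Ordinal.{0}) : Set (Set X) :=
  {s | sᶜ ∈ SigmaB X α}

section Action

variable (G : Subgroup Sinf) {X : Type*} [TopologicalSpace X] [MulAction G X]

/-- The image `S • x` of a point under a set of group elements. -/
def setOrb (S : Set G) (x : X) : Set X := (fun g : G => g • x) '' S

/-- The image `S • B` of a set under a set of group elements. -/
def setSmul (S : Set G) (B : Set X) : Set X := ⋃ g ∈ S, g • B

/-- The `1`-sets `B₁(x, σ)`. -/
def BsetOne (A : ℕ → Set X) (σ : Set (ℕ × ℕ)) (x : X) : Set X :=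
  (⋂ l, ⋂ (_ : (setOrb G (Vb G σ) x ∩ A l).Nonempty), setSmul G (Vc G (prng σ)) (A l)) ∩
    (⋂ l, ⋂ (_ : setOrb G (Vb G σ) x ∩ A l = ∅), (setSmul G (Vc G (prng σ)) (A l))ᶜ)

/-- The successor step of the recursion defining the `α`-sets. -/
def BsetSucc (prev : Set (ℕ × ℕ) → X → Set X) (σ : Set (ℕ × ℕ)) (x : X) : Set X :=
  (⋂ b : Finset ℕ, ⋂ (_ : pdom σ ⊆ ↑b),
      ⋃ σ' ∈ SGfin G, ⋃ (_ : σ ⊆ σ') (_ : pdom σ' = ↑b), prev σ' x) ∩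
    (⋂ a : Finset ℕ, ⋂ (_ : prng σ ⊆ ↑a),
      ⋃ σ' ∈ SGfin G, ⋃ (_ : σ ⊆ σ') (_ : prng σ' = ↑a), prev σ' x)

/-- The `α`-sets `B_α(x, σ)`, for `α ≥ 1` (the value at `α = 0` is junk). -/
def Bset (A : ℕ → Set X) (α : Ordinal.{0}) : Set (ℕ × ℕ) → X → Set X :=
  @Ordinal.limitRecOn (fun _ => Set (ℕ × ℕ) → X → Set X) α
    (fun _ _ => univ)
    (fun o ih => if o = 0 then BsetOne G A else BsetSucc G ih)
    (fun o _ ih σ x => ⋂ β : Ordinal.{0}, ⋂ (hβ : β < o), ⋂ (_ : 1 ≤ β), ih β hβ σ x)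

/-- The family `𝓑^x_{<α}` consisting of the basic open sets together with all
`β`-sets of `x` for `1 ≤ β < α`. -/
def BltFam (A : ℕ → Set X) (x : X) (α : Ordinal.{0}) : Set (Set X) :=
  {B | (∃ l, B = A l) ∨
    ∃ β : Ordinal.{0}, 1 ≤ β ∧ β < α ∧ ∃ σ ∈ SGfin G, B = Bset G A β σ x}

/-- `γ^G_*(x)`: the least countable ordinal `γ` such that for all `σ, δ ∈ S^G_{<∞}`
with equal ranges, if `B_α(x,σ) ≠ B_α(x,δ)` for some countable ordinal `α ≥ 1`,
then already `B_γ(x,σ) ≠ B_γ(x,δ)`. -/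
def gammaStar (A : ℕ → Set X) (x : X) : Ordinal :=
  sInf {γ : Ordinal.{0} | γ.card ≤ Cardinal.aleph0 ∧
    ∀ σ ∈ SGfin G, ∀ δ ∈ SGfin G, prng σ = prng δ →
      (∃ α : Ordinal.{0}, 1 ≤ α ∧ α.card ≤ Cardinal.aleph0 ∧
        Bset G A α σ x ≠ Bset G A α δ x) →
      Bset G A γ σ x ≠ Bset G A γ δ x}

end Action

/-- The topology on a subset `S ⊆ X` generated by the traces on `S` of the members
of the family `F`. -/
def traceTop {X : Type*} (S : Set X) (F : Set (Set X)) : TopologicalSpace S :=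
  TopologicalSpace.generateFrom {u : Set S | ∃ B ∈ F, u = Subtype.val ⁻¹' B}

/-- The space of closed subsets of `Y`. -/
def EffrosSpace (Y : Type*) [TopologicalSpace Y] := {K : Set Y // IsClosed K}

/-- The Effros Borel structure on the space of closed subsets of `Y`. -/
def effrosSigma (Y : Type*) [TopologicalSpace Y] : MeasurableSpace (EffrosSpace Y) :=
  MeasurableSpace.generateFrom
    {S | ∃ U : Set Y, IsOpen U ∧ S = {K : EffrosSpace Y | (K.1 ∩ U).Nonempty}}

set_option linter.unusedSectionVars false

namespace AlphaEquivAux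

variable {G : Subgroup Sinf}

theorem mem_pdom {σ : Set (ℕ × ℕ)} {k : ℕ} : k ∈ pdom σ ↔ ∃ m, (k, m) ∈ σ := by
  constructor
  · rintro ⟨⟨a, b⟩, hp, rfl⟩
    exact ⟨b, hp⟩
  · rintro ⟨m, hm⟩
    exact ⟨(k, m), hm, rfl⟩

theorem mem_prng {σ : Set (ℕ × ℕ)} {m : ℕ} : m ∈ prng σ ↔ ∃ k, (k, m) ∈ σ := by
  constructor
  · rintro ⟨⟨a, b⟩, hp, rfl⟩
    exact ⟨a, hp⟩
  · rintro ⟨k, hk⟩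
    exact ⟨(k, m), hk, rfl⟩

theorem mem_compR {σ : Set (ℕ × ℕ)} {f : Sinf} {p : ℕ × ℕ} :
    p ∈ compR σ f ↔ (f p.1, p.2) ∈ σ := Iff.rfl

theorem mem_compL {σ : Set (ℕ × ℕ)} {f : Sinf} {p : ℕ × ℕ} :
    p ∈ compL f σ ↔ (p.1, f⁻¹ p.2) ∈ σ := Iff.rfl

theorem pdom_compR (σ : Set (ℕ × ℕ)) (f : Sinf) : pdom (compR σ f) = ⇑f ⁻¹' pdom σ := by
  ext k
  simp only [mem_pdom, mem_compR, Set.mem_preimage]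

theorem prng_compR (σ : Set (ℕ × ℕ)) (f : Sinf) : prng (compR σ f) = prng σ := by
  ext m
  simp only [mem_prng, mem_compR]
  constructor
  · rintro ⟨k, hk⟩; exact ⟨f k, hk⟩
  · rintro ⟨k, hk⟩; exact ⟨f⁻¹ k, by simpa using hk⟩

theorem pdom_compL (f : Sinf) (σ : Set (ℕ × ℕ)) : pdom (compL f σ) = pdom σ := by
  ext k
  simp only [mem_pdom, mem_compL]
  constructor
  · rintro ⟨m, hm⟩; exact ⟨f⁻¹ m, hm⟩
  · rintro ⟨m, hm⟩; exact ⟨f m, by simpa using hm⟩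

theorem prng_compL (f : Sinf) (σ : Set (ℕ × ℕ)) : prng (compL f σ) = ⇑f '' prng σ := by
  ext m
  simp only [mem_prng, mem_compL, Set.mem_image]
  constructor
  · rintro ⟨k, hk⟩
    exact ⟨f⁻¹ m, ⟨k, hk⟩, by simp⟩
  · rintro ⟨n, ⟨k, hk⟩, rfl⟩
    exact ⟨k, by simpa using hk⟩

theorem compR_compR (σ : Set (ℕ × ℕ)) (f g : Sinf) :
    compR (compR σ f) g = compR σ (f * g) := rfl

theorem compR_one (σ : Set (ℕ × ℕ)) : compR σ 1 = σ := rfl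

theorem compL_compL (f g : Sinf) (σ : Set (ℕ × ℕ)) :
    compL f (compL g σ) = compL (f * g) σ := by
  ext ⟨k, m⟩
  simp [compL, mul_inv_rev]

theorem compL_one (σ : Set (ℕ × ℕ)) : compL 1 σ = σ := by
  ext ⟨k, m⟩
  simp [compL]

theorem compR_mono {σ τ : Set (ℕ × ℕ)} (hst : σ ⊆ τ) (f : Sinf) :
    compR σ f ⊆ compR τ f := fun _ hp => hst hp

theorem compL_mono (f : Sinf) {σ τ : Set (ℕ × ℕ)} (hst : σ ⊆ τ) :
    compL f σ ⊆ compL f τ := fun _ hp => hst hp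

theorem compR_mem_SGfin {σ : Set (ℕ × ℕ)} (hσ : σ ∈ SGfin G) {f : Sinf} (hf : f ∈ G) :
    compR σ f ∈ SGfin G := by
  obtain ⟨g, hg, d, rfl⟩ := hσ
  refine ⟨g * f, G.mul_mem hg hf, d.image ⇑f⁻¹, ?_⟩
  ext ⟨k, m⟩
  simp only [mem_compR, restr, Set.mem_setOf_eq, Finset.mem_image, Equiv.Perm.mul_apply]
  constructor
  · rintro ⟨h1, h2⟩
    exact ⟨⟨f k, h1, by simp⟩, h2⟩
  · rintro ⟨⟨a, ha, rfl⟩, h2⟩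
    exact ⟨by simpa using ha, h2⟩

theorem compL_mem_SGfin {σ : Set (ℕ × ℕ)} (hσ : σ ∈ SGfin G) {f : Sinf} (hf : f ∈ G) :
    compL f σ ∈ SGfin G := by
  obtain ⟨g, hg, d, rfl⟩ := hσ
  refine ⟨f * g, G.mul_mem hf hg, d, ?_⟩
  ext ⟨k, m⟩
  simp only [mem_compL, restr, Set.mem_setOf_eq, Equiv.Perm.mul_apply]
  constructor
  · rintro ⟨h1, h2⟩
    exact ⟨h1, by rw [h2]; simp⟩
  · rintro ⟨h1, h2⟩
    exact ⟨h1, by rw [← h2]; simp⟩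

theorem mem_Vb_compR {σ : Set (ℕ × ℕ)} {f g : G} :
    g ∈ Vb G (compR σ (f : Sinf)) ↔ g * f⁻¹ ∈ Vb G σ := by
  constructor
  · intro h p hp
    have h2 := h ((((f⁻¹ : G) : Sinf)) p.1, p.2) (by simp only [mem_compR]; simpa using hp)
    simpa using h2
  · intro h p hp
    have h2 := h ((f : Sinf) p.1, p.2) hp
    simpa using h2

theorem mem_Vb_compL {σ : Set (ℕ × ℕ)} {f g : G} :
    g ∈ Vb G (compL (f : Sinf) σ) ↔ f⁻¹ * g ∈ Vb G σ := by
  constructor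
  · intro h q hq
    have h2 := h (q.1, (f : Sinf) q.2) (by simp only [mem_compL]; simpa using hq)
    have h3 : (g : Sinf) q.1 = (f : Sinf) q.2 := h2
    show ((f⁻¹ * g : G) : Sinf) q.1 = q.2
    simp [h3]
  · intro h p hp
    have h2 := h (p.1, ((f : Sinf))⁻¹ p.2) hp
    simpa using h2

theorem Vc_inv {c : Set ℕ} {g : G} (hg : g ∈ Vc G c) : g⁻¹ ∈ Vc G c := by
  intro k hk
  have h := hg k hk
  conv_lhs => rw [← h]
  simp

theorem mem_Vc_image {c : Set ℕ} {f g : G} :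
    g ∈ Vc G (⇑(f : Sinf) '' c) ↔ f⁻¹ * g * f ∈ Vc G c := by
  constructor
  · intro h k hk
    have h2 := h ((f : Sinf) k) ⟨k, hk, rfl⟩
    show ((f⁻¹ * g * f : G) : Sinf) k = k
    simp [h2]
  · rintro h m ⟨k, hk, rfl⟩
    simpa using congrArg (f : Sinf) (h k hk)

theorem compR_eq_self {σ : Set (ℕ × ℕ)} {f : G} (hf : f ∈ Vc G (pdom σ)) :
    compR σ (f : Sinf) = σ := by
  ext ⟨k, m⟩
  simp only [mem_compR]
  constructor
  · intro hp
    have h3 : (f : Sinf) k = k := (f : Sinf).injective (hf _ (mem_pdom.2 ⟨m, hp⟩))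
    rwa [h3] at hp
  · intro hp
    have h3 : (f : Sinf) k = k := hf _ (mem_pdom.2 ⟨m, hp⟩)
    rwa [h3]

theorem compL_eq_self {σ : Set (ℕ × ℕ)} {f : G} (hf : f ∈ Vc G (prng σ)) :
    compL (f : Sinf) σ = σ := by
  ext ⟨k, m⟩
  simp only [mem_compL]
  constructor
  · intro hp
    have h2 := hf _ (mem_prng.2 ⟨k, hp⟩)
    rw [show ((f : Sinf)) (((f : Sinf))⁻¹ m) = m from by simp] at h2
    rwa [← h2] at hp
  · intro hp
    have h2 := hf m (mem_prng.2 ⟨k, hp⟩)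
    have h3 : ((f : Sinf))⁻¹ m = m := by
      conv_lhs => rw [← h2]
      simp
    rwa [h3]

end AlphaEquivAux

namespace AlphaEquivAux

variable {G : Subgroup Sinf} {X : Type*} [TopologicalSpace X] [MulAction G X]

theorem setOrb_compR (σ : Set (ℕ × ℕ)) (f : G) (x : X) :
    setOrb G (Vb G (compR σ (f : Sinf))) x = setOrb G (Vb G σ) (f • x) := by
  ext y
  simp only [setOrb, Set.mem_image]
  constructor
  · rintro ⟨g, hg, rfl⟩
    exact ⟨g * f⁻¹, mem_Vb_compR.1 hg, by rw [mul_smul, inv_smul_smul]⟩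
  · rintro ⟨g, hg, rfl⟩
    refine ⟨g * f, ?_, by rw [mul_smul]⟩
    rw [mem_Vb_compR, mul_inv_cancel_right]
    exact hg

theorem setOrb_compL (σ : Set (ℕ × ℕ)) (f : G) (x : X) :
    setOrb G (Vb G (compL (f : Sinf) σ)) x = f • setOrb G (Vb G σ) x := by
  ext y
  simp only [setOrb, Set.mem_image, Set.mem_smul_set]
  constructor
  · rintro ⟨g, hg, rfl⟩
    refine ⟨(f⁻¹ * g) • x, ⟨f⁻¹ * g, mem_Vb_compL.1 hg, rfl⟩, ?_⟩
    rw [smul_smul, mul_inv_cancel_left]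
  · rintro ⟨z, ⟨g, hg, rfl⟩, rfl⟩
    refine ⟨f * g, ?_, by rw [mul_smul]⟩
    rw [mem_Vb_compL, inv_mul_cancel_left]
    exact hg

theorem setOrb_Vc_smul (c : Set ℕ) (f : G) (y : X) :
    setOrb G (Vc G (⇑(f : Sinf) '' c)) y = f • setOrb G (Vc G c) (f⁻¹ • y) := by
  ext z
  simp only [setOrb, Set.mem_image, Set.mem_smul_set]
  constructor
  · rintro ⟨g, hg, rfl⟩
    refine ⟨(f⁻¹ * g * f) • (f⁻¹ • y), ⟨f⁻¹ * g * f, mem_Vc_image.1 hg, rfl⟩, ?_⟩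
    rw [smul_smul, smul_smul]
    have h : f * (f⁻¹ * g * f) * f⁻¹ = g := by group
    rw [h]
  · rintro ⟨z, ⟨h, hh, rfl⟩, rfl⟩
    refine ⟨f * h * f⁻¹, ?_, ?_⟩
    · rw [mem_Vc_image]
      have he : f⁻¹ * (f * h * f⁻¹) * f = h := by group
      rw [he]
      exact hh
    · rw [smul_smul, smul_smul]

theorem mem_setSmul_Vc {c : Set ℕ} {B : Set X} {y : X} :
    y ∈ setSmul G (Vc G c) B ↔ (setOrb G (Vc G c) y ∩ B).Nonempty := by
  constructor
  · intro hy
    simp only [setSmul, Set.mem_iUnion, exists_prop] at hy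
    obtain ⟨g, hg, hyg⟩ := hy
    exact ⟨g⁻¹ • y, ⟨g⁻¹, Vc_inv hg, rfl⟩, Set.mem_smul_set_iff_inv_smul_mem.1 hyg⟩
  · rintro ⟨z, ⟨g, hg, rfl⟩, hzB⟩
    simp only [setSmul, Set.mem_iUnion, exists_prop]
    refine ⟨g⁻¹, Vc_inv hg, ?_⟩
    rw [Set.mem_smul_set_iff_inv_smul_mem, inv_inv]
    exact hzB

theorem closure_eq_iff_basis {A : ℕ → Set X}
    (hbasis : TopologicalSpace.IsTopologicalBasis (Set.range A)) {S T : Set X} :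
    closure S = closure T ↔ ∀ l, (S ∩ A l).Nonempty ↔ (T ∩ A l).Nonempty := by
  have key : ∀ (S : Set X) (l : ℕ), (S ∩ A l).Nonempty ↔ (closure S ∩ A l).Nonempty := by
    intro S l
    constructor
    · rintro ⟨z, hz1, hz2⟩
      exact ⟨z, subset_closure hz1, hz2⟩
    · rintro ⟨z, hz1, hz2⟩
      obtain ⟨w, hw1, hw2⟩ := mem_closure_iff.1 hz1 (A l) (hbasis.isOpen ⟨l, rfl⟩) hz2
      exact ⟨w, hw2, hw1⟩
  constructor
  · intro h l
    rw [key S l, key T l, h]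
  · intro h
    ext z
    rw [hbasis.mem_closure_iff, hbasis.mem_closure_iff]
    constructor
    · rintro hz o ⟨l, rfl⟩ hzo
      obtain ⟨w, hw1, hw2⟩ := hz _ ⟨l, rfl⟩ hzo
      obtain ⟨v, hv1, hv2⟩ := (h l).1 ⟨w, hw2, hw1⟩
      exact ⟨v, hv2, hv1⟩
    · rintro hz o ⟨l, rfl⟩ hzo
      obtain ⟨w, hw1, hw2⟩ := hz _ ⟨l, rfl⟩ hzo
      obtain ⟨v, hv1, hv2⟩ := (h l).2 ⟨w, hw2, hw1⟩
      exact ⟨v, hv2, hv1⟩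

theorem mem_BsetOne {A : ℕ → Set X}
    (hbasis : TopologicalSpace.IsTopologicalBasis (Set.range A)) {σ : Set (ℕ × ℕ)} {x y : X} :
    y ∈ BsetOne G A σ x ↔
      closure (setOrb G (Vb G σ) x) = closure (setOrb G (Vc G (prng σ)) y) := by
  rw [closure_eq_iff_basis hbasis]
  simp only [BsetOne, Set.mem_inter_iff, Set.mem_iInter, Set.mem_compl_iff]
  constructor
  · rintro ⟨h1, h2⟩ l
    constructor
    · intro hS
      exact mem_setSmul_Vc.1 (h1 l hS)
    · intro hT
      by_contra hS
      exact h2 l (Set.not_nonempty_iff_eq_empty.1 hS) (mem_setSmul_Vc.2 hT)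
  · intro h
    refine ⟨fun l hS => mem_setSmul_Vc.2 ((h l).1 hS), fun l hE hy => ?_⟩
    exact Set.not_nonempty_empty (hE ▸ (h l).2 (mem_setSmul_Vc.1 hy))

variable [ContinuousConstSMul G X]

theorem BsetOne_compR {A : ℕ → Set X}
    (hbasis : TopologicalSpace.IsTopologicalBasis (Set.range A))
    (f : G) (σ : Set (ℕ × ℕ)) (x : X) :
    BsetOne G A σ (f • x) = BsetOne G A (compR σ (f : Sinf)) x := by
  ext y
  rw [mem_BsetOne hbasis, mem_BsetOne hbasis, setOrb_compR, prng_compR]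

theorem BsetOne_compL {A : ℕ → Set X}
    (hbasis : TopologicalSpace.IsTopologicalBasis (Set.range A))
    (f : G) (σ : Set (ℕ × ℕ)) (x : X) :
    f • BsetOne G A σ x = BsetOne G A (compL (f : Sinf) σ) x := by
  ext y
  rw [Set.mem_smul_set_iff_inv_smul_mem, mem_BsetOne hbasis, mem_BsetOne hbasis,
    setOrb_compL, prng_compL, setOrb_Vc_smul, closure_smul, closure_smul,
    smul_left_cancel_iff]

end AlphaEquivAux

namespace AlphaEquivAux

variable {G : Subgroup Sinf} {X : Type*} [TopologicalSpace X] [MulAction G X]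

theorem BsetSucc_compR (prev : Set (ℕ × ℕ) → X → Set X) (f : G)
    (h : ∀ (τ : Set (ℕ × ℕ)) (y : X), prev τ (f • y) = prev (compR τ (f : Sinf)) y)
    (σ : Set (ℕ × ℕ)) (x : X) :
    BsetSucc G prev σ (f • x) = BsetSucc G prev (compR σ (f : Sinf)) x := by
  have hf : (f : Sinf) ∈ G := f.2
  have hfi : ((f : Sinf))⁻¹ ∈ G := G.inv_mem hf
  unfold BsetSucc
  congr 1
  · ext y
    simp only [Set.mem_iInter, Set.mem_iUnion, exists_prop]
    constructor
    · intro H b hb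
      have hb1 : pdom σ ⊆ ↑(b.image ⇑(f : Sinf)) := by
        intro k hk
        have h1 : ((f : Sinf))⁻¹ k ∈ (b : Set ℕ) := hb (by rw [pdom_compR]; simpa using hk)
        simp only [Finset.coe_image, Set.mem_image]
        exact ⟨_, h1, by simp⟩
      obtain ⟨σ', h1, h2, h3, h4⟩ := H _ hb1
      refine ⟨compR σ' (f : Sinf), compR_mem_SGfin h1 hf, compR_mono h2 _, ?_, ?_⟩
      · rw [pdom_compR, h3, Finset.coe_image, Set.preimage_image_eq _ (Equiv.injective _)]
      · rw [← h]; exact h4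
    · intro H b hb
      have hb1 : pdom (compR σ (f : Sinf)) ⊆ ↑(b.image ⇑((f : Sinf))⁻¹) := by
        intro k hk
        rw [pdom_compR] at hk
        simp only [Finset.coe_image, Set.mem_image]
        exact ⟨(f : Sinf) k, hb hk, by simp⟩
      obtain ⟨τ, h1, h2, h3, h4⟩ := H _ hb1
      refine ⟨compR τ ((f : Sinf))⁻¹, compR_mem_SGfin h1 hfi, ?_, ?_, ?_⟩
      · have h5 := compR_mono h2 ((f : Sinf))⁻¹
        rwa [compR_compR, mul_inv_cancel, compR_one] at h5
      · rw [pdom_compR, h3, Finset.coe_image, Set.preimage_image_eq _ (Equiv.injective _)]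
      · rw [h, compR_compR, inv_mul_cancel, compR_one]
        exact h4
  · ext y
    simp only [Set.mem_iInter, Set.mem_iUnion, exists_prop]
    constructor
    · intro H a ha
      rw [prng_compR] at ha
      obtain ⟨σ', h1, h2, h3, h4⟩ := H a ha
      refine ⟨compR σ' (f : Sinf), compR_mem_SGfin h1 hf, compR_mono h2 _, ?_, ?_⟩
      · rw [prng_compR]; exact h3
      · rw [← h]; exact h4
    · intro H a ha
      have ha1 : prng (compR σ (f : Sinf)) ⊆ ↑a := by rw [prng_compR]; exact ha
      obtain ⟨τ, h1, h2, h3, h4⟩ := H a ha1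
      refine ⟨compR τ ((f : Sinf))⁻¹, compR_mem_SGfin h1 hfi, ?_, ?_, ?_⟩
      · have h5 := compR_mono h2 ((f : Sinf))⁻¹
        rwa [compR_compR, mul_inv_cancel, compR_one] at h5
      · rw [prng_compR]; exact h3
      · rw [h, compR_compR, inv_mul_cancel, compR_one]
        exact h4

theorem BsetSucc_compL (prev : Set (ℕ × ℕ) → X → Set X) (f : G)
    (h : ∀ (τ : Set (ℕ × ℕ)) (y : X), f • prev τ y = prev (compL (f : Sinf) τ) y)
    (σ : Set (ℕ × ℕ)) (x : X) :
    f • BsetSucc G prev σ x = BsetSucc G prev (compL (f : Sinf) σ) x := by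
  have hf : (f : Sinf) ∈ G := f.2
  have hfi : ((f : Sinf))⁻¹ ∈ G := G.inv_mem hf
  unfold BsetSucc
  rw [Set.smul_set_inter]
  simp only [Set.smul_set_iInter, Set.smul_set_iUnion, h]
  congr 1
  · ext y
    simp only [Set.mem_iInter, Set.mem_iUnion, exists_prop]
    constructor
    · intro H b hb
      rw [pdom_compL] at hb
      obtain ⟨σ', h1, h2, h3, h4⟩ := H b hb
      exact ⟨compL (f : Sinf) σ', compL_mem_SGfin h1 hf, compL_mono _ h2,
        by rw [pdom_compL]; exact h3, h4⟩
    · intro H b hb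
      have hb1 : pdom (compL (f : Sinf) σ) ⊆ ↑b := by rw [pdom_compL]; exact hb
      obtain ⟨τ, h1, h2, h3, h4⟩ := H b hb1
      refine ⟨compL ((f : Sinf))⁻¹ τ, compL_mem_SGfin h1 hfi, ?_, ?_, ?_⟩
      · have h5 := compL_mono ((f : Sinf))⁻¹ h2
        rwa [compL_compL, inv_mul_cancel, compL_one] at h5
      · rw [pdom_compL]; exact h3
      · rw [compL_compL, mul_inv_cancel, compL_one]
        exact h4
  · ext y
    simp only [Set.mem_iInter, Set.mem_iUnion, exists_prop]
    constructor
    · intro H a ha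
      have ha1 : prng σ ⊆ ↑(a.image ⇑((f : Sinf))⁻¹) := by
        intro k hk
        have h1 : (f : Sinf) k ∈ (a : Set ℕ) := ha (by rw [prng_compL]; exact ⟨k, hk, rfl⟩)
        simp only [Finset.coe_image, Set.mem_image]
        exact ⟨_, h1, by simp⟩
      obtain ⟨σ', h1, h2, h3, h4⟩ := H _ ha1
      refine ⟨compL (f : Sinf) σ', compL_mem_SGfin h1 hf, compL_mono _ h2, ?_, h4⟩
      rw [prng_compL, h3, Finset.coe_image, Set.image_image]
      simp
    · intro H a ha
      have ha1 : prng (compL (f : Sinf) σ) ⊆ ↑(a.image ⇑(f : Sinf)) := by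
        rw [prng_compL]
        rintro m ⟨k, hk, rfl⟩
        simp only [Finset.coe_image, Set.mem_image]
        exact ⟨k, ha hk, rfl⟩
      obtain ⟨τ, h1, h2, h3, h4⟩ := H _ ha1
      refine ⟨compL ((f : Sinf))⁻¹ τ, compL_mem_SGfin h1 hfi, ?_, ?_, ?_⟩
      · have h5 := compL_mono ((f : Sinf))⁻¹ h2
        rwa [compL_compL, inv_mul_cancel, compL_one] at h5
      · rw [prng_compL, h3, Finset.coe_image, Set.image_image]
        simp
      · rw [compL_compL, mul_inv_cancel, compL_one]
        exact h4

theorem Bset_succ_zero (A : ℕ → Set X) :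
    Bset G A (Order.succ 0) = BsetOne G A := by
  simp only [Bset]
  rw [Ordinal.limitRecOn_succ]
  simp

theorem Bset_succ (A : ℕ → Set X) {o : Ordinal.{0}} (ho : o ≠ 0) :
    Bset G A (Order.succ o) = BsetSucc G (Bset G A o) := by
  simp only [Bset, Ordinal.limitRecOn_succ, if_neg ho]

theorem Bset_limit (A : ℕ → Set X) {o : Ordinal.{0}} (ho : Order.IsSuccLimit o) (σ : Set (ℕ × ℕ)) (x : X) :
    Bset G A o σ x = ⋂ β, ⋂ (_ : β < o), ⋂ (_ : 1 ≤ β), Bset G A β σ x := by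
  simp only [Bset]
  rw [Ordinal.limitRecOn_limit _ _ _ _ ho]

theorem Bset_equivariant [ContinuousConstSMul G X] (A : ℕ → Set X)
    (hbasis : TopologicalSpace.IsTopologicalBasis (Set.range A)) (f : G) (α : Ordinal.{0}) :
    1 ≤ α → ∀ (σ : Set (ℕ × ℕ)) (x : X),
      (Bset G A α σ (f • x) = Bset G A α (compR σ (f : Sinf)) x) ∧
      (f • Bset G A α σ x = Bset G A α (compL (f : Sinf) σ) x) := by
  induction α using Ordinal.limitRecOn with
  | zero =>
    intro hα
    exact ((Ordinal.one_le_iff_ne_zero.1 hα) rfl).elim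
  | add_one o ih =>
    intro _ σ x
    rw [← Order.succ_eq_add_one]
    rcases eq_or_ne o 0 with rfl | ho
    · rw [Bset_succ_zero]
      exact ⟨BsetOne_compR hbasis f σ x, BsetOne_compL hbasis f σ x⟩
    · have h1 : (1 : Ordinal) ≤ o := Ordinal.one_le_iff_ne_zero.2 ho
      have IH := ih h1
      simp only [Bset_succ A ho]
      exact ⟨BsetSucc_compR _ f (fun τ y => (IH τ y).1) σ x,
        BsetSucc_compL _ f (fun τ y => (IH τ y).2) σ x⟩
  | limit o ho ih =>
    intro _ σ x
    constructor
    · rw [Bset_limit A ho, Bset_limit A ho]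
      exact Set.iInter_congr fun β => Set.iInter_congr fun hβ => Set.iInter_congr fun h1 =>
        (ih β hβ h1 σ x).1
    · rw [Bset_limit A ho, Bset_limit A ho]
      simp only [Set.smul_set_iInter]
      exact Set.iInter_congr fun β => Set.iInter_congr fun hβ => Set.iInter_congr fun h1 =>
        (ih β hβ h1 σ x).2

end AlphaEquivAux


open AlphaEquivAux in
/-- Equivariance of α-sets. -/
theorem alphaSet_equivariance
    (G : Subgroup Sinf) (hGclosed : IsClosed (G : Set Sinf))
    {X : Type*} [TopologicalSpace X] [PolishSpace X] [MulAction G X] [ContinuousSMul G X]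
    (A : ℕ → Set X) (hbasis : TopologicalSpace.IsTopologicalBasis (Set.range A))
    (hbasisInv : ∀ l, ∃ c : Finset ℕ, ∀ g ∈ Vc G (↑c : Set ℕ), g • A l = A l)
    (x : X) (σ : Set (ℕ × ℕ)) (hσ : σ ∈ SGfin G) (f : G)
    (α : Ordinal.{0}) (hα : 1 ≤ α) (hαc : α.card ≤ Cardinal.aleph0) :
    (Bset G A α σ (f • x) = Bset G A α (compR σ (f : Sinf)) x) ∧
    (f ∈ Vc G (pdom σ) → Bset G A α σ (f • x) = Bset G A α σ x) ∧
    (f • Bset G A α σ x = Bset G A α (compL (f : Sinf) σ) x) ∧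
    (f ∈ Vc G (prng σ) → f • Bset G A α σ x = Bset G A α σ x) := by
  have key := Bset_equivariant (G := G) (X := X) A hbasis f α hα σ x
  refine ⟨key.1, fun hf => ?_, key.2, fun hf => ?_⟩
  · rw [key.1, compR_eq_self hf]
  · rw [key.2, compL_eq_self hf]
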